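/- The envy-free optimal revenue is subadditive over partitions of the agents: if the agent set N is partitioned into S and M, then EFO(S) + EFO(M) ≥ EFO(N), where EFO(T) denotes the maximum total payment over outcomes for the agents in T that are envy-free, individually rational, and budget respecting within a symmetric downward-closed feasibility environment. -/

import Mathlib

open Classical in

theorem EFO_subadditive (n : ℕ) (v : Fin n → ℝ) (B : ℝ)
    (hB : 0 ≤ B) (hv : ∀ i, 0 ≤ v i)
    (F : Set (Fin n → ℝ))                       -- feasible allocations
    (hF0 : (0 : Fin n → ℝ) ∈ F)
    (hFdc : ∀ x ∈ F, ∀ T : Set (Fin n),         -- downward closed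
      (fun i => if i ∈ T then x i else 0) ∈ F)
    (hFsym : ∀ x ∈ F, ∀ σ : Equiv.Perm (Fin n), x ∘ σ ∈ F)  -- symmetric
    (EFO : Finset (Fin n) → ℝ)
    (hEFO : ∀ T : Finset (Fin n), EFO T = sSup {r : ℝ | ∃ x p : Fin n → ℝ,
      x ∈ F ∧
      (∀ i ∈ T, ∀ j ∈ T, v i * x i - p i ≥ v i * x j - p j) ∧  -- envy free
      (∀ i ∈ T, v i * x i - p i ≥ 0) ∧                          -- IR
      (∀ i ∈ T, p i ≤ B) ∧                                      -- budget
      r = ∑ i ∈ T, p i})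
    (S M : Finset (Fin n)) (hdisj : Disjoint S M) (hcover : S ∪ M = Finset.univ) :
    EFO S + EFO M ≥ EFO Finset.univ := by
  set A : Finset (Fin n) → Set ℝ := fun T => {r : ℝ | ∃ x p : Fin n → ℝ,
      x ∈ F ∧
      (∀ i ∈ T, ∀ j ∈ T, v i * x i - p i ≥ v i * x j - p j) ∧
      (∀ i ∈ T, v i * x i - p i ≥ 0) ∧
      (∀ i ∈ T, p i ≤ B) ∧
      r = ∑ i ∈ T, p i} with hAdef
  have hbdd : ∀ T : Finset (Fin n), BddAbove (A T) := by
    intro T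
    refine ⟨(T.card : ℝ) * B, ?_⟩
    rintro r ⟨x, p, -, -, -, hb, rfl⟩
    calc ∑ i ∈ T, p i ≤ ∑ _i ∈ T, B := Finset.sum_le_sum hb
      _ = (T.card : ℝ) * B := by simp [mul_comm]
  have hne : ∀ T : Finset (Fin n), (A T).Nonempty := by
    intro T
    refine ⟨0, 0, 0, hF0, ?_, ?_, ?_, ?_⟩ <;> simp [hB]
  rw [hEFO, hEFO, hEFO]
  refine csSup_le (hne _) ?_
  rintro r ⟨x, p, hxF, hef, hir, hbud, rfl⟩
  have hS : ∑ i ∈ S, p i ≤ sSup (A S) := le_csSup (hbdd S)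
    ⟨x, p, hxF, fun i _ j _ => hef i (Finset.mem_univ i) j (Finset.mem_univ j),
      fun i _ => hir i (Finset.mem_univ i), fun i _ => hbud i (Finset.mem_univ i), rfl⟩
  have hM : ∑ i ∈ M, p i ≤ sSup (A M) := le_csSup (hbdd M)
    ⟨x, p, hxF, fun i _ j _ => hef i (Finset.mem_univ i) j (Finset.mem_univ j),
      fun i _ => hir i (Finset.mem_univ i), fun i _ => hbud i (Finset.mem_univ i), rfl⟩
  have hsum : ∑ i ∈ Finset.univ, p i = ∑ i ∈ S, p i + ∑ i ∈ M, p i := by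
    rw [← hcover, Finset.sum_union hdisj]
  rw [hsum]
  exact add_le_add hS hM
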